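/- Let G < GL(V) be a finite abelian group generated by transvections. Then the relative Hilbert ideal h_{V^G} equals the ideal of k[V] generated by (V^G)^⊥, and is generated by n − s G-invariant linear forms, where s = dim V^G; in particular it is a complete intersection ideal generated by linear invariants. -/

import Mathlib

open MvPolynomial

set_option synthInstance.maxHeartbeats 1000000
set_option maxHeartbeats 1000000

variable {k : Type*} [Field k] {ι : Type*} [Fintype ι] [DecidableEq ι]

noncomputable def galAct (M : Matrix.GeneralLinearGroup ι k) :
    MvPolynomial ι k →ₐ[k] MvPolynomial ι k :=
  aeval fun i => ∑ j, (((M⁻¹ : Matrix.GeneralLinearGroup ι k) : Matrix ι ι k) i j) • X j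

def invariants (G : Subgroup (Matrix.GeneralLinearGroup ι k)) :
    Subalgebra k (MvPolynomial ι k) where
  carrier := {p | ∀ σ ∈ G, galAct σ p = p}
  mul_mem' := fun ha hb σ hσ => by rw [map_mul, ha σ hσ, hb σ hσ]
  add_mem' := fun ha hb σ hσ => by rw [map_add, ha σ hσ, hb σ hσ]
  algebraMap_mem' := fun r σ hσ => by simp [galAct]

noncomputable def fixedSpace (M : Matrix.GeneralLinearGroup ι k) : Submodule k (ι → k) :=
  LinearMap.ker (Matrix.mulVecLin ((M : Matrix ι ι k) - 1))

noncomputable def moveSpace (M : Matrix.GeneralLinearGroup ι k) : Submodule k (ι → k) :=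
  LinearMap.range (Matrix.mulVecLin ((M : Matrix ι ι k) - 1))

def IsPseudoReflection (M : Matrix.GeneralLinearGroup ι k) : Prop :=
  Module.finrank k (moveSpace M) = 1

def IsTransvection (M : Matrix.GeneralLinearGroup ι k) : Prop :=
  IsPseudoReflection M ∧ moveSpace M ≤ fixedSpace M

noncomputable def linForm (y : Module.Dual k (ι → k)) : MvPolynomial ι k :=
  ∑ i, C (y (Pi.single i 1)) * X i

noncomputable def hilbertIdeal (G : Subgroup (Matrix.GeneralLinearGroup ι k)) :
    Ideal (MvPolynomial ι k) :=
  Ideal.span {p | p ∈ invariants G ∧ ∃ d, 0 < d ∧ p.IsHomogeneous d}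

def DSP (G : Subgroup (Matrix.GeneralLinearGroup ι k)) : Prop :=
  ∃ π : MvPolynomial ι k →ₗ[↥(invariants G)] ↥(invariants G),
    Function.Surjective π ∧
    ∀ (p : MvPolynomial ι k) (d : ℕ), p.IsHomogeneous d →
      ((π p : MvPolynomial ι k)).IsHomogeneous d

noncomputable def fixedSubmodule (G : Subgroup (Matrix.GeneralLinearGroup ι k)) :
    Submodule k (ι → k) := ⨅ σ ∈ G, fixedSpace σ

-- basic membership lemmas
lemma mem_fixedSpace_iff {M : Matrix.GeneralLinearGroup ι k} {v : ι → k} :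
    v ∈ fixedSpace M ↔ (M : Matrix ι ι k).mulVec v = v := by
  simp [fixedSpace, LinearMap.mem_ker, Matrix.sub_mulVec, sub_eq_zero, Matrix.one_mulVec]

lemma mem_moveSpace_iff {M : Matrix.GeneralLinearGroup ι k} {w : ι → k} :
    w ∈ moveSpace M ↔ ∃ v, (M : Matrix ι ι k).mulVec v - v = w := by
  simp [moveSpace, LinearMap.mem_range, Matrix.sub_mulVec, Matrix.one_mulVec]

lemma fix_of_mem {G : Subgroup (Matrix.GeneralLinearGroup ι k)}
    {σ : Matrix.GeneralLinearGroup ι k} (hσ : σ ∈ G) {v : ι → k}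
    (hv : v ∈ fixedSubmodule G) : (σ : Matrix ι ι k).mulVec v = v := by
  have : v ∈ fixedSpace σ := by
    have := (Submodule.mem_iInf _).1 hv σ
    exact (Submodule.mem_iInf _).1 this hσ
  exact mem_fixedSpace_iff.1 this

-- transvections fix each line (σ−1)V pointwise, if everything is abelian
lemma moveSpace_le_fixedSubmodule {G : Subgroup (Matrix.GeneralLinearGroup ι k)}
    (habelian : ∀ a ∈ G, ∀ b ∈ G, a * b = b * a)
    (hgen : Subgroup.closure {τ | τ ∈ G ∧ IsTransvection τ} = G)
    {σ : Matrix.GeneralLinearGroup ι k} (hσ : σ ∈ G) :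
    moveSpace σ ≤ fixedSubmodule G := by
  -- Step 1: for transvections τ in G, every element of G fixes moveSpace τ pointwise.
  have step1 : ∀ τ ∈ G, IsTransvection τ → moveSpace τ ≤ fixedSubmodule G := by
    intro τ hτG hτ
    refine le_iInf fun ρ => le_iInf fun hρ => ?_
    intro w hw
    rw [mem_fixedSpace_iff]
    rw [← hgen] at hρ
    induction hρ using Subgroup.closure_induction generalizing w with
    | mem σ' hσ' =>
      obtain ⟨hσ'G, hσ't⟩ := hσ'
      have hpres : (σ' : Matrix ι ι k).mulVec w ∈ moveSpace τ := by
        obtain ⟨u, hu⟩ := mem_moveSpace_iff.1 hw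
        rw [mem_moveSpace_iff]
        refine ⟨(σ' : Matrix ι ι k).mulVec u, ?_⟩
        have hcomm : (τ : Matrix ι ι k) * (σ' : Matrix ι ι k)
            = (σ' : Matrix ι ι k) * (τ : Matrix ι ι k) := by
          have h := congrArg (Units.val) (habelian σ' hσ'G τ hτG)
          simpa [Units.val_mul] using h.symm
        rw [Matrix.mulVec_mulVec, hcomm, ← Matrix.mulVec_mulVec, ← hu,
          Matrix.mulVec_sub]
      by_cases hw0 : w = 0
      · simp [hw0]
      · have h1 : Module.finrank k (moveSpace τ) = 1 := hτ.1
        set w' : moveSpace τ := ⟨w, hw⟩ with hw'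
        have hw'0 : w' ≠ 0 := by
          simp [hw', Submodule.mk_eq_zero, hw0]
        have hspan := (finrank_eq_one_iff_of_nonzero w' hw'0).1 h1
        have hmem : (⟨(σ' : Matrix ι ι k).mulVec w, hpres⟩ : moveSpace τ)
            ∈ Submodule.span k ({w'} : Set (moveSpace τ)) := by
          rw [hspan]; trivial
        obtain ⟨c, hc⟩ := Submodule.mem_span_singleton.1 hmem
        have hc' : (σ' : Matrix ι ι k).mulVec w = c • w := by
          have h := congrArg (Subtype.val) hc
          simpa [hw'] using h.symm
        have hm : (σ' : Matrix ι ι k).mulVec w - w ∈ moveSpace σ' :=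
          mem_moveSpace_iff.2 ⟨w, rfl⟩
        have hfix : (σ' : Matrix ι ι k).mulVec ((σ' : Matrix ι ι k).mulVec w - w)
            = (σ' : Matrix ι ι k).mulVec w - w :=
          mem_fixedSpace_iff.1 (hσ't.2 hm)
        rw [Matrix.mulVec_sub, hc'] at hfix
        have hσw : (σ' : Matrix ι ι k).mulVec (c • w) = (c * c) • w := by
          rw [Matrix.mulVec_smul, hc', smul_smul]
        rw [hσw] at hfix
        -- hfix : (c*c) • w - c • w = c • w - w
        have hpoly : ((c - 1) ^ 2) • w = 0 := by
          linear_combination (norm := module) hfix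
        have hc1 : c = 1 := by
          by_contra hne
          have hne2 : ((c - 1) ^ 2) ≠ 0 := pow_ne_zero _ (sub_ne_zero.2 hne)
          exact hw0 ((smul_eq_zero_iff_right hne2).1 hpoly)
        rw [hc', hc1, one_smul]
    | one => simp [Matrix.one_mulVec]
    | mul a b ha hb iha ihb =>
      have hab : ((a * b : Matrix.GeneralLinearGroup ι k) : Matrix ι ι k)
          = (a : Matrix ι ι k) * (b : Matrix ι ι k) := rfl
      rw [hab, ← Matrix.mulVec_mulVec, ihb hw, iha hw]
    | inv a ha iha =>
      have h1 : ((a⁻¹ : Matrix.GeneralLinearGroup ι k) : Matrix ι ι k)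
          * (a : Matrix ι ι k) = 1 := Units.inv_mul a
      have h := congrArg (fun M => Matrix.mulVec M w) h1
      simp only [Matrix.one_mulVec, ← Matrix.mulVec_mulVec] at h
      rw [iha hw] at h
      exact h
  -- Step 2: closure induction for general σ
  rw [← hgen] at hσ
  induction hσ using Subgroup.closure_induction with
  | mem σ' hσ' => exact step1 σ' hσ'.1 hσ'.2
  | one =>
    intro w hw
    obtain ⟨v, hv⟩ := mem_moveSpace_iff.1 hw
    rw [← hv]
    simp [Matrix.one_mulVec]
  | mul a b ha hb iha ihb =>
    intro w hw
    obtain ⟨v, hv⟩ := mem_moveSpace_iff.1 hw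
    have haG : a ∈ G := by rw [← hgen]; exact ha
    have hab : ((a * b : Matrix.GeneralLinearGroup ι k) : Matrix ι ι k)
        = (a : Matrix ι ι k) * (b : Matrix ι ι k) := rfl
    have hu : (b : Matrix ι ι k).mulVec v - v ∈ fixedSubmodule G :=
      ihb (mem_moveSpace_iff.2 ⟨v, rfl⟩)
    have hkey : (a : Matrix ι ι k).mulVec ((b : Matrix ι ι k).mulVec v)
        = ((b : Matrix ι ι k).mulVec v - v) + (a : Matrix ι ι k).mulVec v := by
      have h5 := fix_of_mem haG hu
      rw [Matrix.mulVec_sub] at h5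
      linear_combination (norm := module) h5
    have hdecomp : w = ((b : Matrix ι ι k).mulVec v - v)
        + ((a : Matrix ι ι k).mulVec v - v) := by
      rw [← hv, hab, ← Matrix.mulVec_mulVec, hkey]
      abel
    rw [hdecomp]
    exact Submodule.add_mem _ hu (iha (mem_moveSpace_iff.2 ⟨v, rfl⟩))
  | inv a ha iha =>
    intro w hw
    obtain ⟨v, hv⟩ := mem_moveSpace_iff.1 hw
    have haG : a ∈ G := by rw [← hgen]; exact ha
    have h1 : ((a⁻¹ : Matrix.GeneralLinearGroup ι k) : Matrix ι ι k)
        * (a : Matrix ι ι k) = 1 := Units.inv_mul a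
    set A' := ((a⁻¹ : Matrix.GeneralLinearGroup ι k) : Matrix ι ι k) with hA'
    have hu : (a : Matrix ι ι k).mulVec v - v ∈ fixedSubmodule G :=
      iha (mem_moveSpace_iff.2 ⟨v, rfl⟩)
    have hneg : -((a : Matrix ι ι k).mulVec v - v) ∈ fixedSubmodule G :=
      Submodule.neg_mem _ hu
    have hfix := fix_of_mem (Subgroup.inv_mem G haG) hneg
    have heq : w = -((a : Matrix ι ι k).mulVec v - v) := by
      rw [← hv]
      have h2 : A'.mulVec (v - (a : Matrix ι ι k).mulVec v) = A'.mulVec v - v := by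
        rw [Matrix.mulVec_sub, Matrix.mulVec_mulVec, h1, Matrix.one_mulVec]
      rw [← h2]
      have h3 : A'.mulVec (v - (a : Matrix ι ι k).mulVec v)
          = v - (a : Matrix ι ι k).mulVec v := by
        rw [← neg_sub ((a : Matrix ι ι k).mulVec v) v] at *
        exact hfix
      rw [h3, neg_sub]
    rw [heq]
    exact hneg

lemma dual_apply (y : Module.Dual k (ι → k)) (v : ι → k) :
    y v = ∑ i, v i * y (Pi.single i 1) := by
  have hv : v = ∑ i, v i • (Pi.single i 1 : ι → k) := by
    funext j; simp [Finset.sum_apply, Pi.single_apply]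
  conv_lhs => rw [hv]
  rw [map_sum]
  simp [smul_eq_mul]

lemma galAct_linForm (M : Matrix.GeneralLinearGroup ι k) (y : Module.Dual k (ι → k))
    (hy : ∀ v, y (((M⁻¹ : Matrix.GeneralLinearGroup ι k) : Matrix ι ι k).mulVec v) = y v) :
    galAct M (linForm y) = linForm y := by
  set N := ((M⁻¹ : Matrix.GeneralLinearGroup ι k) : Matrix ι ι k) with hN
  have hcoef : ∀ j, (∑ i, y (Pi.single i 1) * N i j) = y (Pi.single j 1) := by
    intro j
    rw [← hy (Pi.single j 1), dual_apply y (N.mulVec (Pi.single j 1))]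
    refine Finset.sum_congr rfl fun i _ => ?_
    rw [mul_comm]
    congr 1
    simp [Matrix.mulVec_single]
  unfold galAct linForm
  rw [map_sum]
  simp only [map_mul, aeval_C, aeval_X, algebraMap_eq]
  calc ∑ i, C (y (Pi.single i 1)) * ∑ j, N i j • X j
      = ∑ i, ∑ j, C (y (Pi.single i 1) * N i j) * X j := by
        refine Finset.sum_congr rfl fun i _ => ?_
        rw [Finset.mul_sum]
        refine Finset.sum_congr rfl fun j _ => ?_
        rw [smul_eq_C_mul, ← mul_assoc, ← C_mul]
    _ = ∑ j, ∑ i, C (y (Pi.single i 1) * N i j) * X j := Finset.sum_comm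
    _ = ∑ j, C (y (Pi.single j 1)) * X j := by
        refine Finset.sum_congr rfl fun j _ => ?_
        rw [← Finset.sum_mul, ← map_sum, hcoef j]

lemma linForm_sum {α : Type*} (s : Finset α) (f : α → Module.Dual k (ι → k)) :
    linForm (∑ a ∈ s, f a) = ∑ a ∈ s, linForm (f a) := by
  unfold linForm
  simp only [LinearMap.sum_apply, map_sum, Finset.sum_mul]
  exact Finset.sum_comm

lemma linForm_smul (c : k) (y : Module.Dual k (ι → k)) :
    linForm (c • y) = C c * linForm y := by
  simp [linForm, Finset.mul_sum, mul_assoc]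

lemma linForm_mem_invariants {G : Subgroup (Matrix.GeneralLinearGroup ι k)}
    (habelian : ∀ a ∈ G, ∀ b ∈ G, a * b = b * a)
    (hgen : Subgroup.closure {τ | τ ∈ G ∧ IsTransvection τ} = G)
    {y : Module.Dual k (ι → k)} (hy : y ∈ (fixedSubmodule G).dualAnnihilator) :
    linForm y ∈ invariants G := by
  intro σ hσ
  apply galAct_linForm
  intro v
  have hinv : σ⁻¹ ∈ G := inv_mem hσ
  have hmove : ((σ⁻¹ : Matrix.GeneralLinearGroup ι k) : Matrix ι ι k).mulVec v - v
      ∈ fixedSubmodule G :=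
    moveSpace_le_fixedSubmodule habelian hgen hinv (mem_moveSpace_iff.2 ⟨v, rfl⟩)
  have h0 := (Submodule.mem_dualAnnihilator y).1 hy _ hmove
  rw [map_sub, sub_eq_zero] at h0
  exact h0

/-- Let `G < GL(V)` be a finite abelian group generated by transvections,
`s = dim V^G`. Then the relative Hilbert ideal `h_{V^G}` (the extension to `k[V]` of the
contraction to `k[V]^G` of the ideal generated by `(V^G)^⊥`) equals the ideal of `k[V]`
generated by `(V^G)^⊥`, and it is generated by `n − s` `G`-invariant linear forms; in
particular it is a complete intersection ideal generated by linear invariants. -/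
theorem statement11 {k : Type*} [Field k] {n : ℕ}
    (G : Subgroup (Matrix.GeneralLinearGroup (Fin n) k)) [Finite ↥G]
    (habelian : ∀ a ∈ G, ∀ b ∈ G, a * b = b * a)
    (hgen : Subgroup.closure {τ | τ ∈ G ∧ IsTransvection τ} = G) :
    Ideal.map (algebraMap ↥(invariants G) (MvPolynomial (Fin n) k))
        (Ideal.comap (algebraMap ↥(invariants G) (MvPolynomial (Fin n) k))
          (Ideal.span (linForm ''
            ((fixedSubmodule G).dualAnnihilator : Set (Module.Dual k (Fin n → k)))))) =
      Ideal.span (linForm ''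
        ((fixedSubmodule G).dualAnnihilator : Set (Module.Dual k (Fin n → k)))) ∧
    ∃ y : Fin (n - Module.finrank k ↥(fixedSubmodule G)) → Module.Dual k (Fin n → k),
      (∀ i, linForm (y i) ∈ invariants G) ∧
      Ideal.span (Set.range fun i => linForm (y i)) =
        Ideal.span (linForm ''
          ((fixedSubmodule G).dualAnnihilator : Set (Module.Dual k (Fin n → k)))) := by
  
  set W := fixedSubmodule G with hW
  constructor
  · apply le_antisymm Ideal.map_comap_le
    refine Ideal.span_le.2 ?_
    rintro p ⟨y, hy, rfl⟩
    have hinv : linForm y ∈ invariants G := linForm_mem_invariants habelian hgen hy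
    have hmem : (⟨linForm y, hinv⟩ : ↥(invariants G)) ∈
        Ideal.comap (algebraMap ↥(invariants G) (MvPolynomial (Fin n) k))
          (Ideal.span (linForm '' (W.dualAnnihilator : Set (Module.Dual k (Fin n → k))))) := by
      rw [Ideal.mem_comap]
      exact Ideal.subset_span ⟨y, hy, rfl⟩
    exact Ideal.mem_map_of_mem _ hmem
  · have h1 : Module.finrank k W.dualAnnihilator = n - Module.finrank k W := by
      rw [← (Subspace.quotEquivAnnihilator W).finrank_eq]
      have h2 := Submodule.finrank_quotient_add_finrank W
      have hn : Module.finrank k (Fin n → k) = n := by simp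
      omega
    haveI : Module.Free k ↥W.dualAnnihilator :=
      Module.Free.of_divisionRing k ↥(W.dualAnnihilator)
    haveI : FiniteDimensional k ↥W.dualAnnihilator :=
      FiniteDimensional.finiteDimensional_submodule _
    set b := Module.finBasisOfFinrankEq k W.dualAnnihilator h1 with hb
    refine ⟨fun i => ((b i) : Module.Dual k (Fin n → k)), ?_, ?_⟩
    · intro i
      exact linForm_mem_invariants habelian hgen (b i).2
    · apply le_antisymm
      · refine Ideal.span_le.2 ?_
        rintro p ⟨i, rfl⟩
        exact Ideal.subset_span ⟨_, (b i).2, rfl⟩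
      · refine Ideal.span_le.2 ?_
        rintro p ⟨z, hz, rfl⟩
        have hz' : (⟨z, hz⟩ : W.dualAnnihilator)
            = ∑ i, b.repr ⟨z, hz⟩ i • b i := (b.sum_repr ⟨z, hz⟩).symm
        have hzz : z = ∑ i, b.repr ⟨z, hz⟩ i • ((b i : Module.Dual k (Fin n → k))) := by
          have h := congrArg Subtype.val hz'
          rw [Submodule.coe_sum] at h
          simpa only [Submodule.coe_smul] using h
        rw [hzz, linForm_sum]
        refine Ideal.sum_mem _ fun i _ => ?_
        rw [linForm_smul]
        exact Ideal.mul_mem_left _ _ (Ideal.subset_span ⟨i, rfl⟩)
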